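/- In every tree with at least 3 vertices, there exists a maximum independent set that contains all leaves and contains no support vertices. -/

import Mathlib

open SimpleGraph Finset

/-- Auxiliary: in a graph, if `u` and `v` have each other as the unique neighbor,
then any walk starting in `{u, v}` stays in `{u, v}`. -/
lemma trap_walk {V : Type*} [Fintype V] [DecidableEq V] (G : SimpleGraph V)
    [DecidableRel G.Adj] {u v : V} (hu : G.neighborFinset u = {v})
    (hv : G.neighborFinset v = {u}) :
    ∀ x y : V, ∀ _ : G.Walk x y, (x = u ∨ x = v) → (y = u ∨ y = v) := by
  intro x y p
  induction p with
  | nil => exact id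
  | @cons a b c h p ih =>
    rintro (rfl | rfl)
    · have hb : b ∈ G.neighborFinset a := (G.mem_neighborFinset _ _).mpr h
      rw [hu] at hb
      simp only [Finset.mem_singleton] at hb
      exact ih (Or.inr hb)
    · have hb : b ∈ G.neighborFinset a := (G.mem_neighborFinset _ _).mpr h
      rw [hv] at hb
      simp only [Finset.mem_singleton] at hb
      exact ih (Or.inl hb)

/-- In every tree with at least 3 vertices, there is a maximum independent set
containing all leaves and no support vertices. -/
theorem stmt0 {V : Type*} [Fintype V] [DecidableEq V] (G : SimpleGraph V)
    [DecidableRel G.Adj] (hT : G.IsTree) (hn : 3 ≤ Fintype.card V) :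
    ∃ s : Finset V,
      (∀ u ∈ s, ∀ w ∈ s, ¬ G.Adj u w) ∧
      (∀ t : Finset V, (∀ u ∈ t, ∀ w ∈ t, ¬ G.Adj u w) → t.card ≤ s.card) ∧
      (∀ v, G.degree v = 1 → v ∈ s) ∧
      (∀ v ∈ s, ¬ ∃ u, G.Adj v u ∧ G.degree u = 1) := by
  classical
  set N := Fintype.card V with hN
  let S : Finset (Finset V) :=
    Finset.univ.filter (fun t => ∀ u ∈ t, ∀ w ∈ t, ¬ G.Adj u w)
  have hSne : S.Nonempty := ⟨∅, by simp [S]⟩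
  let key : Finset V → ℕ :=
    fun t => t.card * (N + 1) + (t.filter (fun x => G.degree x = 1)).card
  obtain ⟨s, hsS, hmax⟩ := S.exists_max_image key hSne
  have hs : ∀ u ∈ s, ∀ w ∈ s, ¬ G.Adj u w := (Finset.mem_filter.mp hsS).2
  -- cardinal maximality
  have hcardmax : ∀ t : Finset V, (∀ u ∈ t, ∀ w ∈ t, ¬ G.Adj u w) → t.card ≤ s.card := by
    intro t ht
    have htS : t ∈ S := Finset.mem_filter.mpr ⟨Finset.mem_univ _, ht⟩
    have h1 := hmax t htS
    by_contra hlt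
    push_neg at hlt
    have h2 : (s.card + 1) * (N + 1) ≤ t.card * (N + 1) :=
      Nat.mul_le_mul_right _ hlt
    have h3 : (s.filter (fun x => G.degree x = 1)).card ≤ N :=
      le_trans (Finset.card_filter_le _ _) (Finset.card_le_univ s)
    have h4 : t.card * (N + 1) ≤ key t := Nat.le_add_right _ _
    simp only [key] at h1
    nlinarith [h1, h2, h3, h4]
  -- all leaves belong to s
  have hleaf : ∀ v, G.degree v = 1 → v ∈ s := by
    intro v hv
    by_contra hvs
    -- the unique neighbor u of v
    obtain ⟨u, hu⟩ := Finset.card_eq_one.mp (by rwa [G.card_neighborFinset_eq_degree])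
    have hadj : G.Adj v u := by
      have : u ∈ G.neighborFinset v := by rw [hu]; exact Finset.mem_singleton_self u
      exact (G.mem_neighborFinset _ _).mp this
    have hnbr : ∀ w, G.Adj v w → w = u := by
      intro w hw
      have : w ∈ G.neighborFinset v := (G.mem_neighborFinset _ _).mpr hw
      rwa [hu, Finset.mem_singleton] at this
    by_cases hus : u ∈ s
    · -- swap u for v
      -- u is not a leaf
      have hune : ¬ G.degree u = 1 := by
        intro hdu
        obtain ⟨w, hw⟩ := Finset.card_eq_one.mp (by rwa [G.card_neighborFinset_eq_degree])
        have hvw : v ∈ G.neighborFinset u := (G.mem_neighborFinset _ _).mpr hadj.symm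
        rw [hw, Finset.mem_singleton] at hvw
        subst hvw
        -- so neighbors of u = {v}, neighbors of v = {u}
        have hex : ∃ z : V, z ≠ u ∧ z ≠ v := by
          by_contra hno
          push_neg at hno
          have hsub : (Finset.univ : Finset V) ⊆ {u, v} := by
            intro x _
            by_cases hx : x = u
            · simp [hx]
            · simp [hno x hx]
          have := Finset.card_le_card hsub
          have h2 : ({u, v} : Finset V).card ≤ 2 :=
            le_trans (Finset.card_insert_le _ _) (by simp)
          have h5 : (Finset.univ : Finset V).card = N := Finset.card_univ
          omega
        obtain ⟨z, hzu, hzv⟩ := hex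
        have hr : G.Reachable u z := hT.isConnected.preconnected u z
        obtain ⟨p⟩ := hr
        rcases trap_walk G hw hu u z p (Or.inl rfl) with h | h
        · exact hzu h
        · exact hzv h
      -- build the swapped set
      set s' := insert v (s.erase u) with hs'
      have hvne : v ∉ s.erase u := fun h => hvs (Finset.mem_of_mem_erase h)
      have hs'indep : ∀ a ∈ s', ∀ b ∈ s', ¬ G.Adj a b := by
        intro a ha b hb hab
        rw [hs', Finset.mem_insert] at ha hb
        rcases ha with rfl | ha <;> rcases hb with rfl | hb
        · exact G.loopless.irrefl _ hab
        · exact Finset.notMem_erase u s (hnbr b hab ▸ hb)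
        · exact Finset.notMem_erase u s (hnbr a hab.symm ▸ ha)
        · exact hs a (Finset.mem_of_mem_erase ha) b (Finset.mem_of_mem_erase hb) hab
      have hs'S : s' ∈ S := Finset.mem_filter.mpr ⟨Finset.mem_univ _, hs'indep⟩
      have hcard' : s'.card = s.card := by
        rw [hs', Finset.card_insert_of_notMem hvne, Finset.card_erase_of_mem hus]
        have : 1 ≤ s.card := Finset.card_pos.mpr ⟨u, hus⟩
        omega
      have hfilt : (s'.filter (fun x => G.degree x = 1)).card
          = (s.filter (fun x => G.degree x = 1)).card + 1 := by
        rw [hs', Finset.filter_insert, if_pos hv, Finset.filter_erase,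
          Finset.erase_eq_of_notMem (by simp [hune]),
          Finset.card_insert_of_notMem (by simp [hvs])]
      have hk := hmax s' hs'S
      simp only [key, hcard', hfilt] at hk
      omega
    · -- just insert v
      have hindep : ∀ a ∈ insert v s, ∀ b ∈ insert v s, ¬ G.Adj a b := by
        intro a ha b hb hab
        rw [Finset.mem_insert] at ha hb
        rcases ha with rfl | ha <;> rcases hb with rfl | hb
        · exact G.loopless.irrefl _ hab
        · exact hus (hnbr b hab ▸ hb)
        · exact hus (hnbr a hab.symm ▸ ha)
        · exact hs a ha b hb hab
      have := hcardmax _ hindep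
      rw [Finset.card_insert_of_notMem hvs] at this
      omega
  refine ⟨s, hs, hcardmax, hleaf, ?_⟩
  rintro v hvs ⟨u, hadj, hdu⟩
  exact hs v hvs u (hleaf u hdu) hadj
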